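/- The determinant of ρ_m⁰(ξ) for ξ = ξ₁e₁ + ξ₂e₂ + ξ₃e₃ ∈ R³ equals (ξ₁² + ξ₂² + ξ₃²)^{(m+1)/2} · ∏_{k=0}^{m} i(2k-m). In particular, if m is odd, then ρ_m⁰(ξ) is invertible for every nonzero ξ ∈ R³. -/

import Mathlib

open Complex Matrix Finset

-- `V_m` is modelled as coefficient vectors `Fin (m+1) → ℂ` w.r.t. the basis `z^0, …, z^m`.

/-- The Clifford homomorphism `ρ_m⁰ : ℝ³ → End(V_m)`, as the matrix of the operator determined
by `ρ_m⁰(e₁/2)z^k = i(k-m/2)z^k`, `ρ_m⁰(e₂/2+ie₃/2)z^k = -k z^{k-1}`,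
`ρ_m⁰(e₂/2-ie₃/2)z^k = (m-k)z^{k+1}`, extended real-linearly in `X = (X₁,X₂,X₃)`. -/
noncomputable def rho0 (m : ℕ) (X : ℝ × ℝ × ℝ) : Matrix (Fin (m + 1)) (Fin (m + 1)) ℂ :=
  fun j k =>
    (X.1 : ℂ) * (Complex.I * (2 * (k.val : ℂ) - (m : ℂ))) * (if j.val = k.val then 1 else 0)
    + (X.2.1 : ℂ) * ((if j.val + 1 = k.val then -(k.val : ℂ) else 0)
        + (if j.val = k.val + 1 then (m : ℂ) - (k.val : ℂ) else 0))
    + (X.2.2 : ℂ) * ((if j.val + 1 = k.val then Complex.I * (k.val : ℂ) else 0)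
        + (if j.val = k.val + 1 then Complex.I * ((m : ℂ) - (k.val : ℂ)) else 0))

/-- The raising Clifford homomorphism `ρ_m⁺ : ℝ³ → Hom(V_m, V_{m+2})`, determined by
`ρ_m⁺(e₁/2)z^k = i z^{k+1}`, `ρ_m⁺(e₂/2+ie₃/2)z^k = -z^k`, `ρ_m⁺(e₂/2-ie₃/2)z^k = -z^{k+2}`. -/
noncomputable def rhoPlus (m : ℕ) (X : ℝ × ℝ × ℝ) : Matrix (Fin (m + 3)) (Fin (m + 1)) ℂ :=
  fun j k =>
    (X.1 : ℂ) * (if j.val = k.val + 1 then 2 * Complex.I else 0)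
    + (X.2.1 : ℂ) * ((if j.val = k.val then -1 else 0) + (if j.val = k.val + 2 then -1 else 0))
    + (X.2.2 : ℂ) * ((if j.val = k.val then Complex.I else 0)
        + (if j.val = k.val + 2 then -Complex.I else 0))

/-- The lowering Clifford homomorphism `ρ_{m+2}⁻ : ℝ³ → Hom(V_{m+2}, V_m)`, determined (with
`M = m+2`) by `ρ⁻(e₁/2)z^k = ik(M-k)z^{k-1}`, `ρ⁻(e₂/2+ie₃/2)z^k = k(k-1)z^{k-2}`,
`ρ⁻(e₂/2-ie₃/2)z^k = (M-k)(M-k-1)z^k`. -/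
noncomputable def rhoMinus (m : ℕ) (X : ℝ × ℝ × ℝ) : Matrix (Fin (m + 1)) (Fin (m + 3)) ℂ :=
  fun j k =>
    (X.1 : ℂ) * (if j.val + 1 = k.val then
        2 * Complex.I * (k.val : ℂ) * ((m : ℂ) + 2 - (k.val : ℂ)) else 0)
    + (X.2.1 : ℂ) * ((if j.val + 2 = k.val then (k.val : ℂ) * ((k.val : ℂ) - 1) else 0)
        + (if j.val = k.val then
            ((m : ℂ) + 2 - (k.val : ℂ)) * ((m : ℂ) + 1 - (k.val : ℂ)) else 0))
    + (X.2.2 : ℂ) * ((if j.val + 2 = k.val then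
          -Complex.I * (k.val : ℂ) * ((k.val : ℂ) - 1) else 0)
        + (if j.val = k.val then
            Complex.I * ((m : ℂ) + 2 - (k.val : ℂ)) * ((m : ℂ) + 1 - (k.val : ℂ)) else 0))

/-- The Lie bracket on `ℝ³ ≅ su(2)` obtained by identifying `eⱼ ↔ σⱼ` (Pauli matrices),
so that `[e₁,e₂] = 2e₃` cyclically. -/
def bracket3 (X Y : ℝ × ℝ × ℝ) : ℝ × ℝ × ℝ :=
  (2 * (X.2.1 * Y.2.2 - X.2.2 * Y.2.1),
   2 * (X.2.2 * Y.1 - X.1 * Y.2.2),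
   2 * (X.1 * Y.2.1 - X.2.1 * Y.1))

/-- The standard inner product on `ℝ³`. -/
def inner3 (X Y : ℝ × ℝ × ℝ) : ℝ := X.1 * Y.1 + X.2.1 * Y.2.1 + X.2.2 * Y.2.2

/-- The inner product on `V_m` in which `v_m^k = z^k/√(k!(m-k)!)` is an orthonormal basis,
i.e. `⟨z^j, z^k⟩ = k!(m-k)! δ_{jk}`; antilinear in the second argument. -/
noncomputable def ipV (m : ℕ) (u v : Fin (m + 1) → ℂ) : ℂ :=
  ∑ k : Fin (m + 1), ((Nat.factorial k.val : ℂ) * (Nat.factorial (m - k.val) : ℂ))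
    * u k * (starRingEnd ℂ) (v k)

section AuxForDetRho0

lemma sum_ite_val {n : ℕ} (v : ℕ) (hv : v < n) (g : Fin n → ℂ) :
    (∑ l : Fin n, if (l : ℕ) = v then g l else 0) = g ⟨v, hv⟩ := by
  rw [Finset.sum_eq_single (⟨v, hv⟩ : Fin n)]
  · simp
  · intro l _ hl
    exact if_neg (fun h => hl (Fin.ext h))
  · intro h; exact absurd (Finset.mem_univ _) h

lemma sum_ite_val_ge {n : ℕ} (v : ℕ) (hv : n ≤ v) (g : Fin n → ℂ) :
    (∑ l : Fin n, if (l : ℕ) = v then g l else 0) = 0 := by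
  apply Finset.sum_eq_zero; intro l _; exact if_neg (by omega)

lemma sum_ite_succ_zero {n : ℕ} (g : Fin n → ℂ) :
    (∑ l : Fin n, if (l : ℕ) + 1 = 0 then g l else 0) = 0 := by
  apply Finset.sum_eq_zero; intro l _; exact if_neg (by omega)

lemma sum_ite_succ {n : ℕ} (v : ℕ) (hv : v < n) (g : Fin n → ℂ) :
    (∑ l : Fin n, if (l : ℕ) + 1 = v + 1 then g l else 0) = g ⟨v, hv⟩ := by
  rw [← sum_ite_val v hv g]
  exact Finset.sum_congr rfl fun l _ => by congr 1; simp [Nat.succ_inj]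

noncomputable def Tm (m : ℕ) (α : ℂ) : Matrix (Fin (m + 1)) (Fin (m + 1)) ℂ :=
  Matrix.of fun j k => (Nat.choose (k : ℕ) (j : ℕ) : ℂ) * α ^ ((k : ℕ) - (j : ℕ))

lemma TM_apply (m : ℕ) (ξ : ℝ × ℝ × ℝ) (α : ℂ) (j k : Fin (m + 1)) :
    (Tm m α * rho0 m ξ) j k
      = (Nat.choose (k : ℕ) (j : ℕ) : ℂ) * α ^ ((k : ℕ) - (j : ℕ))
          * ((ξ.1 : ℂ) * (Complex.I * (2 * ((k : ℕ) : ℂ) - (m : ℂ))))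
      + (Nat.choose ((k : ℕ) - 1) (j : ℕ) : ℂ) * α ^ ((k : ℕ) - 1 - (j : ℕ))
          * (((k : ℕ) : ℂ) * (-(ξ.2.1 : ℂ) + Complex.I * (ξ.2.2 : ℂ)))
      + (Nat.choose ((k : ℕ) + 1) (j : ℕ) : ℂ) * α ^ ((k : ℕ) + 1 - (j : ℕ))
          * (((m : ℂ) - ((k : ℕ) : ℂ)) * ((ξ.2.1 : ℂ) + Complex.I * (ξ.2.2 : ℂ))) := by
  obtain ⟨K, hK⟩ := k
  rw [Matrix.mul_apply]
  simp only [rho0, Tm, Matrix.of_apply, mul_add, mul_ite, mul_zero, mul_one]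
  rw [Finset.sum_add_distrib, Finset.sum_add_distrib, Finset.sum_add_distrib,
    Finset.sum_add_distrib]
  rcases Nat.lt_or_ge (K + 1) (m + 1) with hKm | hKm
  · rcases K with _ | K'
    · rw [sum_ite_val 0 hK, sum_ite_succ_zero, sum_ite_succ_zero,
        sum_ite_val 1 hKm, sum_ite_val 1 hKm]
      push_cast
      ring
    · rw [sum_ite_val (K' + 1) hK, sum_ite_succ K' (by omega), sum_ite_succ K' (by omega),
        sum_ite_val (K' + 2) hKm, sum_ite_val (K' + 2) hKm]
      simp only [Fin.val_mk, Nat.succ_sub_one]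
      push_cast
      ring
  · have hKm' : K = m := by omega
    subst hKm'
    rw [sum_ite_val K hK, sum_ite_val_ge (K + 1) (by omega), sum_ite_val_ge (K + 1) (by omega)]
    rcases K with _ | K'
    · rw [sum_ite_succ_zero, sum_ite_succ_zero]
      push_cast
      ring
    · rw [sum_ite_succ K' (by omega), sum_ite_succ K' (by omega)]
      simp only [Fin.val_mk, Nat.succ_sub_one]
      push_cast
      ring

lemma sum_ite_val' {n : ℕ} (v : ℕ) (hv : v < n) (g : Fin n → ℂ) :
    (∑ l : Fin n, if v = (l : ℕ) then g l else 0) = g ⟨v, hv⟩ := by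
  rw [← sum_ite_val v hv g]
  exact Finset.sum_congr rfl fun l _ => by congr 1; simp [eq_comm]

lemma sum_ite_succ_zero' {n : ℕ} (g : Fin n → ℂ) :
    (∑ l : Fin n, if 0 = (l : ℕ) + 1 then g l else 0) = 0 := by
  apply Finset.sum_eq_zero; intro l _; exact if_neg (by omega)

lemma sum_ite_succ' {n : ℕ} (v : ℕ) (hv : v < n) (g : Fin n → ℂ) :
    (∑ l : Fin n, if v + 1 = (l : ℕ) + 1 then g l else 0) = g ⟨v, hv⟩ := by
  rw [← sum_ite_val v hv g]
  exact Finset.sum_congr rfl fun l _ => by congr 1; simp [eq_comm, Nat.succ_inj]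

noncomputable def Lm (m : ℕ) (c w : ℂ) : Matrix (Fin (m + 1)) (Fin (m + 1)) ℂ :=
  Matrix.of fun j k =>
    (if (j : ℕ) = (k : ℕ) then w * (((k : ℕ) : ℂ) - (m : ℂ) / 2) else 0)
    + (if (j : ℕ) = (k : ℕ) + 1 then c * (((k : ℕ) : ℂ) - (m : ℂ)) else 0)

lemma LT_apply (m : ℕ) (c w α : ℂ) (j k : Fin (m + 1)) :
    (Lm m c w * Tm m α) j k
      = w * (((j : ℕ) : ℂ) - (m : ℂ) / 2)
          * ((Nat.choose (k : ℕ) (j : ℕ) : ℂ) * α ^ ((k : ℕ) - (j : ℕ)))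
      + (if (j : ℕ) = 0 then 0 else
          c * ((((j : ℕ) : ℂ) - 1) - (m : ℂ))
            * ((Nat.choose (k : ℕ) ((j : ℕ) - 1) : ℂ) * α ^ ((k : ℕ) - ((j : ℕ) - 1)))) := by
  obtain ⟨J, hJ⟩ := j
  rw [Matrix.mul_apply]
  simp only [Lm, Tm, Matrix.of_apply, add_mul, ite_mul, zero_mul]
  rw [Finset.sum_add_distrib]
  rcases J with _ | J'
  · rw [sum_ite_val' 0 hJ, sum_ite_succ_zero']
    simp
  · rw [sum_ite_val' (J' + 1) hJ, sum_ite_succ' J' (by omega)]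
    simp only [Fin.val_mk, Nat.succ_sub_one, if_neg (Nat.succ_ne_zero J')]
    push_cast
    ring

lemma entry_identity (m J K : ℕ) (α x1 x2 x3 : ℂ)
    (hα : (-x2 - Complex.I * x3) * α ^ 2 + (2 * Complex.I * x1) * α + (-x2 + Complex.I * x3) = 0) :
    (Nat.choose K J : ℂ) * α ^ (K - J) * (x1 * (Complex.I * (2 * (K : ℂ) - (m : ℂ))))
    + (Nat.choose (K - 1) J : ℂ) * α ^ (K - 1 - J) * ((K : ℂ) * (-x2 + Complex.I * x3))
    + (Nat.choose (K + 1) J : ℂ) * α ^ (K + 1 - J) * (((m : ℂ) - (K : ℂ)) * (x2 + Complex.I * x3))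
    = (2 * Complex.I * x1 + 2 * (-x2 - Complex.I * x3) * α) * ((J : ℂ) - (m : ℂ) / 2)
        * ((Nat.choose K J : ℂ) * α ^ (K - J))
    + (if J = 0 then 0 else
        (-x2 - Complex.I * x3) * (((J : ℂ) - 1) - (m : ℂ))
          * ((Nat.choose K (J - 1) : ℂ) * α ^ (K - (J - 1)))) := by
  rcases J with _ | J'
  · simp only [if_pos rfl, Nat.choose_zero_right, Nat.sub_zero, Nat.cast_one, add_zero]
    rcases K with _ | K'
    · push_cast
      ring
    · simp only [Nat.succ_sub_one]
      push_cast
      linear_combination (((K' : ℂ) + 1) * α ^ K') * hα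
  · rw [if_neg (Nat.succ_ne_zero J')]
    simp only [Nat.succ_sub_one]
    rcases Nat.lt_or_ge K (J' + 1) with hKJ | hKJ
    · rcases Nat.lt_or_ge K J' with hKJ' | hKJ'
      · rw [Nat.choose_eq_zero_of_lt (by omega : K < J' + 1),
          Nat.choose_eq_zero_of_lt (by omega : K - 1 < J' + 1),
          Nat.choose_eq_zero_of_lt (by omega : K + 1 < J' + 1),
          Nat.choose_eq_zero_of_lt (by omega : K < J')]
        push_cast
        ring
      · have hKe : K = J' := by omega
        subst hKe
        rw [Nat.choose_eq_zero_of_lt (by omega : K < K + 1),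
          Nat.choose_eq_zero_of_lt (by omega : K - 1 < K + 1),
          Nat.choose_self, Nat.choose_self,
          (by omega : K + 1 - (K + 1) = 0), (by omega : K - K = 0)]
        push_cast
        ring
    · obtain ⟨e, rfl⟩ : ∃ e, K = J' + 1 + e := ⟨K - (J' + 1), by omega⟩
      rcases e with _ | e'
      · simp only [Nat.add_zero]
        rw [(by omega : J' + 1 - (J' + 1) = 0),
          (by omega : J' + 1 - 1 = J'),
          Nat.choose_eq_zero_of_lt (by omega : J' < J' + 1), Nat.choose_self,
          (by omega : J' + 1 + 1 - (J' + 1) = 1),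
          (by omega : J' + 1 - J' = 1),
          Nat.choose_succ_self_right, Nat.choose_succ_self_right]
        push_cast
        ring
      · rw [(by omega : J' + 1 + (e' + 1) = J' + 1 + e' + 1)]
        have h1 := Nat.choose_mul_succ_eq (J' + 1 + e') (J' + 1)
        have h2 := Nat.choose_succ_right_eq (J' + 1 + e' + 1) J'
        have h3 := Nat.choose_succ_succ' (J' + 1 + e' + 1) J'
        rw [(by omega : J' + 1 + e' + 1 - (J' + 1) = e' + 1)] at h1
        rw [(by omega : J' + 1 + e' + 1 - J' = e' + 2)] at h2
        have h1c := congrArg (Nat.cast (R := ℂ)) h1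
        have h2c := congrArg (Nat.cast (R := ℂ)) h2
        have h3c := congrArg (Nat.cast (R := ℂ)) h3
        push_cast at h1c h2c h3c
        simp only [(by omega : J' + 1 + e' + 1 - (J' + 1) = e' + 1),
          (by omega : J' + 1 + e' + 1 - 1 = J' + 1 + e'),
          (by omega : J' + 1 + e' - (J' + 1) = e'),
          (by omega : J' + 1 + e' + 1 + 1 - (J' + 1) = e' + 2),
          (by omega : J' + 1 + e' + 1 - J' = e' + 2)]
        push_cast
        linear_combination
          ((Nat.choose (J' + 1 + e') (J' + 1) : ℂ) * ((J' : ℂ) + 1 + (e' : ℂ) + 1) * α ^ e') * hα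
          + (-(2 * Complex.I * x1 * α ^ (e' + 1)) - (-x2 - Complex.I * x3) * α ^ (e' + 2)) * h1c
          + (-((-x2 - Complex.I * x3) * α ^ (e' + 2))) * h2c
          + (-(((m : ℂ) - ((J' : ℂ) + 1 + (e' : ℂ) + 1)) * (-x2 - Complex.I * x3) * α ^ (e' + 2))) * h3c

lemma key (m : ℕ) (ξ : ℝ × ℝ × ℝ) (α : ℂ)
    (hα : (-(ξ.2.1 : ℂ) - Complex.I * (ξ.2.2 : ℂ)) * α ^ 2
        + (2 * Complex.I * (ξ.1 : ℂ)) * α + (-(ξ.2.1 : ℂ) + Complex.I * (ξ.2.2 : ℂ)) = 0) :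
    Tm m α * rho0 m ξ
      = Lm m (-(ξ.2.1 : ℂ) - Complex.I * (ξ.2.2 : ℂ))
          (2 * Complex.I * (ξ.1 : ℂ) + 2 * (-(ξ.2.1 : ℂ) - Complex.I * (ξ.2.2 : ℂ)) * α)
        * Tm m α := by
  ext j k
  rw [TM_apply, LT_apply]
  have h := entry_identity m (j : ℕ) (k : ℕ) α (ξ.1 : ℂ) (ξ.2.1 : ℂ) (ξ.2.2 : ℂ) hα
  convert h using 2

lemma det_Tm (m : ℕ) (α : ℂ) : (Tm m α).det = 1 := by
  rw [Matrix.det_of_upperTriangular (M := Tm m α)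
    (fun i j (h : (j : Fin (m+1)) < i) => by
      simp only [Tm, Matrix.of_apply]
      rw [Nat.choose_eq_zero_of_lt h]
      simp)]
  simp [Tm]

lemma det_Lm (m : ℕ) (c w : ℂ) :
    (Lm m c w).det = ∏ i : Fin (m + 1), (w * (((i : ℕ) : ℂ) - (m : ℂ) / 2)) := by
  rw [Matrix.det_of_lowerTriangular (Lm m c w)
    (fun i j (h : i < j) => by
      simp only [Lm, Matrix.of_apply]
      rw [if_neg (by omega : ¬ (i : ℕ) = (j : ℕ)), if_neg (by omega : ¬ (i : ℕ) = (j : ℕ) + 1)]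
      simp)]
  exact Finset.prod_congr rfl fun i _ => by simp [Lm]

lemma det_rho0_eq (m : ℕ) (ξ : ℝ × ℝ × ℝ) (α : ℂ)
    (hα : (-(ξ.2.1 : ℂ) - Complex.I * (ξ.2.2 : ℂ)) * α ^ 2
        + (2 * Complex.I * (ξ.1 : ℂ)) * α + (-(ξ.2.1 : ℂ) + Complex.I * (ξ.2.2 : ℂ)) = 0) :
    (rho0 m ξ).det = ∏ i : Fin (m + 1),
      ((2 * Complex.I * (ξ.1 : ℂ) + 2 * (-(ξ.2.1 : ℂ) - Complex.I * (ξ.2.2 : ℂ)) * α)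
        * (((i : ℕ) : ℂ) - (m : ℂ) / 2)) := by
  have h := congrArg Matrix.det (key m ξ α hα)
  rw [Matrix.det_mul, Matrix.det_mul, det_Tm, one_mul, mul_one] at h
  rw [h, det_Lm]

end AuxForDetRho0

/-- `det ρ_m⁰(ξ) = (ξ₁² + ξ₂² + ξ₃²)^{(m+1)/2} · ∏_{k=0}^m i(2k-m)`; in particular
for odd `m`, `ρ_m⁰(ξ)` is invertible for every `ξ ≠ 0` (ellipticity of `D_m⁰`). -/
theorem det_rho0 (m : ℕ) (ξ : ℝ × ℝ × ℝ) :
    (rho0 m ξ).det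
      = ((((ξ.1 ^ 2 + ξ.2.1 ^ 2 + ξ.2.2 ^ 2) ^ (((m : ℝ) + 1) / 2) : ℝ)) : ℂ)
          * ∏ k ∈ Finset.range (m + 1), (Complex.I * (2 * (k : ℂ) - (m : ℂ)))
    ∧ (Odd m → ξ ≠ 0 → IsUnit (rho0 m ξ)) := by
  have hS : (0 : ℝ) ≤ ξ.1 ^ 2 + ξ.2.1 ^ 2 + ξ.2.2 ^ 2 := by positivity
  have hsq : ((Real.sqrt (ξ.1 ^ 2 + ξ.2.1 ^ 2 + ξ.2.2 ^ 2) : ℝ) : ℂ) ^ 2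
      = ((ξ.1 ^ 2 + ξ.2.1 ^ 2 + ξ.2.2 ^ 2 : ℝ) : ℂ) := by
    rw [← Complex.ofReal_pow, Real.sq_sqrt hS]
  push_cast at hsq
  obtain ⟨α, hα, hw⟩ : ∃ α : ℂ,
      ((-(ξ.2.1 : ℂ) - Complex.I * (ξ.2.2 : ℂ)) * α ^ 2
        + (2 * Complex.I * (ξ.1 : ℂ)) * α + (-(ξ.2.1 : ℂ) + Complex.I * (ξ.2.2 : ℂ)) = 0) ∧
      (2 * Complex.I * (ξ.1 : ℂ) + 2 * (-(ξ.2.1 : ℂ) - Complex.I * (ξ.2.2 : ℂ)) * α) ^ 2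
        = -4 * ((ξ.1 : ℂ) ^ 2 + (ξ.2.1 : ℂ) ^ 2 + (ξ.2.2 : ℂ) ^ 2) := by
    by_cases hc : (-(ξ.2.1 : ℂ) - Complex.I * (ξ.2.2 : ℂ)) = 0
    · have hre := congrArg Complex.re hc
      have him := congrArg Complex.im hc
      simp [Complex.ext_iff] at hre him
      refine ⟨0, ?_, ?_⟩
      · simp [hre, him]
      · rw [hre, him]; push_cast
        linear_combination (4 * (ξ.1 : ℂ) ^ 2) * Complex.I_sq
    · set c := -(ξ.2.1 : ℂ) - Complex.I * (ξ.2.2 : ℂ) with hcdef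
      set b := 2 * Complex.I * (ξ.1 : ℂ) with hbdef
      set d := 2 * Complex.I
          * ((Real.sqrt (ξ.1 ^ 2 + ξ.2.1 ^ 2 + ξ.2.2 ^ 2) : ℝ) : ℂ) with hddef
      have h4 : (-b + d) ^ 2 + 2 * b * (-b + d)
          + 4 * (-(ξ.2.1 : ℂ) + Complex.I * (ξ.2.2 : ℂ)) * c = 0 := by
        rw [hddef, hbdef, hcdef]
        linear_combination (4 * Complex.I ^ 2) * hsq + (4 * (ξ.2.1 : ℂ) ^ 2) * Complex.I_sq
      refine ⟨(-b + d) / (2 * c), ?_, ?_⟩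
      · have heq : c * ((-b + d) / (2 * c)) ^ 2 + b * ((-b + d) / (2 * c))
            + (-(ξ.2.1 : ℂ) + Complex.I * (ξ.2.2 : ℂ))
            = ((-b + d) ^ 2 + 2 * b * (-b + d)
                + 4 * (-(ξ.2.1 : ℂ) + Complex.I * (ξ.2.2 : ℂ)) * c) / (4 * c) := by
          field_simp
          ring
        rw [heq, h4, zero_div]
      · have hd : b + 2 * c * ((-b + d) / (2 * c)) = d := by
          field_simp
          ring
        rw [hd, hddef]
        linear_combination (4 * Complex.I ^ 2) * hsq
          + (4 * ((ξ.1 : ℂ) ^ 2 + (ξ.2.1 : ℂ) ^ 2 + (ξ.2.2 : ℂ) ^ 2)) * Complex.I_sq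
  set w := 2 * Complex.I * (ξ.1 : ℂ) + 2 * (-(ξ.2.1 : ℂ) - Complex.I * (ξ.2.2 : ℂ)) * α
    with hwdef
  have hdet := det_rho0_eq m ξ α hα
  rw [Fin.prod_univ_eq_prod_range (fun i => w * ((i : ℂ) - (m : ℂ) / 2)) (m + 1)] at hdet
  have hdet2 : (rho0 m ξ).det
      = (w / 2) ^ (m + 1) * ∏ k ∈ Finset.range (m + 1), (2 * (k : ℂ) - (m : ℂ)) := by
    rw [hdet]
    rw [show (∏ k ∈ Finset.range (m + 1), (w * ((k : ℂ) - (m : ℂ) / 2)))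
        = ∏ k ∈ Finset.range (m + 1), ((w / 2) * (2 * (k : ℂ) - (m : ℂ))) from
      Finset.prod_congr rfl fun k _ => by ring]
    rw [Finset.prod_mul_distrib, Finset.prod_const, Finset.card_range]
  have main : (rho0 m ξ).det
      = ((((ξ.1 ^ 2 + ξ.2.1 ^ 2 + ξ.2.2 ^ 2) ^ (((m : ℝ) + 1) / 2) : ℝ)) : ℂ)
          * ∏ k ∈ Finset.range (m + 1), (Complex.I * (2 * (k : ℂ) - (m : ℂ))) := by
    rw [hdet2, show (∏ k ∈ Finset.range (m + 1), (Complex.I * (2 * (k : ℂ) - (m : ℂ))))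
        = Complex.I ^ (m + 1) * ∏ k ∈ Finset.range (m + 1), (2 * (k : ℂ) - (m : ℂ)) from by
      rw [Finset.prod_mul_distrib, Finset.prod_const, Finset.card_range]]
    rcases Nat.even_or_odd m with hm | hm
    · obtain ⟨t, rfl⟩ := hm
      have hz : (2 * ((t : ℕ) : ℂ) - ((t + t : ℕ) : ℂ)) = 0 := by push_cast; ring
      rw [show (∏ k ∈ Finset.range (t + t + 1), (2 * (k : ℂ) - ((t + t : ℕ) : ℂ))) = 0 from
        Finset.prod_eq_zero (Finset.mem_range.2 (by omega : t < t + t + 1)) hz]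
      ring
    · obtain ⟨t, rfl⟩ := hm
      have hrp : ((ξ.1 ^ 2 + ξ.2.1 ^ 2 + ξ.2.2 ^ 2 : ℝ)
            ^ ((((2 * t + 1 : ℕ) : ℝ) + 1) / 2) : ℝ)
          = (Real.sqrt (ξ.1 ^ 2 + ξ.2.1 ^ 2 + ξ.2.2 ^ 2)) ^ (2 * t + 1 + 1) := by
        rw [show ((((2 * t + 1 : ℕ) : ℝ)) + 1) / 2
            = (1 / 2 : ℝ) * ((2 * t + 1 + 1 : ℕ) : ℝ) from by push_cast; ring,
          Real.rpow_mul hS, Real.rpow_natCast, ← Real.sqrt_eq_rpow]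
      rw [hrp]
      have hpow : (w / 2) ^ (2 * t + 1 + 1)
          = ((((Real.sqrt (ξ.1 ^ 2 + ξ.2.1 ^ 2 + ξ.2.2 ^ 2) : ℝ)) : ℂ)
              * Complex.I) ^ (2 * t + 1 + 1) := by
        rw [show 2 * t + 1 + 1 = 2 * (t + 1) from by ring, pow_mul, pow_mul]
        congr 1
        have h1 : (w / 2) ^ 2 = -((ξ.1 : ℂ) ^ 2 + (ξ.2.1 : ℂ) ^ 2 + (ξ.2.2 : ℂ) ^ 2) := by
          linear_combination hw / 4
        have h2 : ((((Real.sqrt (ξ.1 ^ 2 + ξ.2.1 ^ 2 + ξ.2.2 ^ 2) : ℝ)) : ℂ)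
              * Complex.I) ^ 2 = -((ξ.1 : ℂ) ^ 2 + (ξ.2.1 : ℂ) ^ 2 + (ξ.2.2 : ℂ) ^ 2) := by
          rw [mul_pow, hsq, Complex.I_sq]; ring
        rw [h1, h2]
      rw [hpow]
      push_cast
      ring
  refine ⟨main, fun hm hξ => ?_⟩
  rw [Matrix.isUnit_iff_isUnit_det, main, isUnit_iff_ne_zero]
  have hpos : 0 < ξ.1 ^ 2 + ξ.2.1 ^ 2 + ξ.2.2 ^ 2 := by
    have hne : ξ.1 ≠ 0 ∨ ξ.2.1 ≠ 0 ∨ ξ.2.2 ≠ 0 := by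
      by_contra h
      push_neg at h
      exact hξ (by rw [show ξ = (ξ.1, ξ.2.1, ξ.2.2) from rfl, h.1, h.2.1, h.2.2]; rfl)
    rcases hne with h | h | h <;> positivity
  apply mul_ne_zero
  · exact Complex.ofReal_ne_zero.2 (ne_of_gt (Real.rpow_pos_of_pos hpos _))
  · obtain ⟨t, rfl⟩ := hm
    refine Finset.prod_ne_zero_iff.2 fun k hk => mul_ne_zero Complex.I_ne_zero fun h0 => ?_
    have h1 : ((2 * k : ℕ) : ℂ) = ((2 * t + 1 : ℕ) : ℂ) := by
      push_cast at h0 ⊢; linear_combination h0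
    have := Nat.cast_injective (R := ℂ) h1
    omega
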